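/- Let $\Omega$ be a commutative semigroup, $(L, \{\cdot,\cdot\}_{\alpha,\beta}, p_\alpha, q_\alpha)_{\alpha,\beta\in\Omega}$ a BiHom-$\Omega$-Lie algebra, and $(R_\alpha)_{\alpha\in\Omega}$ a Rota-Baxter family of weight $\lambda$ on $L$ with $R_\alpha\circ p_\alpha = p_\alpha\circ R_\alpha$ and $R_\alpha\circ q_\alpha = q_\alpha\circ R_\alpha$. Define $\langle x,y\rangle_{\alpha,\beta} := \{R_\alpha(x), y\}_{\alpha,\beta} + \{x, R_\beta(y)\}_{\alpha,\beta} + \lambda\{x,y\}_{\alpha,\beta}$. Then $(L, \langle\cdot,\cdot\rangle_{\alpha,\beta}, p_\alpha, q_\alpha)_{\alpha,\beta\in\Omega}$ is a BiHom-$\Omega$-Lie algebra. -/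
import Mathlib


/-- A Rota-Baxter family of weight λ on a BiHom-Ω-Lie algebra induces a new
BiHom-Ω-Lie algebra. -/
theorem stmt_13
    {K : Type*} [Field K] {Ω : Type*} [CommSemigroup Ω]
    {L : Type*} [AddCommGroup L] [Module K L]
    (br : Ω → Ω → L →ₗ[K] L →ₗ[K] L)
    (p q : Ω → L →ₗ[K] L)
    (lam : K)
    -- (L, br, p, q) is a BiHom-Ω-Lie algebra
    (hp : ∀ (α β : Ω) (x y : L), p (α * β) (br α β x y) = br α β (p α x) (p β y))
    (hq : ∀ (α β : Ω) (x y : L), q (α * β) (br α β x y) = br α β (q α x) (q β y))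
    (hpq : ∀ (α : Ω) (x : L), p α (q α x) = q α (p α x))
    (hskew : ∀ (α β : Ω) (x y : L), br α β (q α x) (p β y) = - br β α (q β y) (p α x))
    (hjac : ∀ (α β γ : Ω) (x y z : L),
      br α (β * γ) (q α (q α x)) (br β γ (q β y) (p γ z))
        + br β (γ * α) (q β (q β y)) (br γ α (q γ z) (p α x))
        + br γ (α * β) (q γ (q γ z)) (br α β (q α x) (p β y)) = 0)
    -- (R_α) is a Rota-Baxter family of weight λ, commuting with p and q
    (R : Ω → L →ₗ[K] L)
    (hRB : ∀ (α β : Ω) (x y : L),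
      br α β (R α x) (R β y)
        = R (α * β) (br α β (R α x) y + br α β x (R β y) + lam • br α β x y))
    (hRp : ∀ (α : Ω) (x : L), R α (p α x) = p α (R α x))
    (hRq : ∀ (α : Ω) (x : L), R α (q α x) = q α (R α x))
    -- the new bracket
    (nbr : Ω → Ω → L → L → L)
    (hnbr : ∀ (α β : Ω) (x y : L),
      nbr α β x y = br α β (R α x) y + br α β x (R β y) + lam • br α β x y) :
    -- (L, nbr, p, q) is a BiHom-Ω-Lie algebra
    (∀ (α β : Ω) (x y : L), p (α * β) (nbr α β x y) = nbr α β (p α x) (p β y)) ∧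
    (∀ (α β : Ω) (x y : L), q (α * β) (nbr α β x y) = nbr α β (q α x) (q β y)) ∧
    (∀ (α β : Ω) (x y : L), nbr α β (q α x) (p β y) = - nbr β α (q β y) (p α x)) ∧
    (∀ (α β γ : Ω) (x y z : L),
      nbr α (β * γ) (q α (q α x)) (nbr β γ (q β y) (p γ z))
        + nbr β (γ * α) (q β (q β y)) (nbr γ α (q γ z) (p α x))
        + nbr γ (α * β) (q γ (q γ z)) (nbr α β (q α x) (p β y)) = 0) := by
  have hRN : ∀ (α β : Ω) (a b : L),
      R (α * β) (nbr α β a b) = br α β (R α a) (R β b) := by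
    intro α β a b
    rw [hnbr]
    exact (hRB α β a b).symm
  refine ⟨?_, ?_, ?_, ?_⟩
  · intro α β x y
    simp only [hnbr, map_add, map_smul, hp, hRp]
  · intro α β x y
    simp only [hnbr, map_add, map_smul, hq, hRq]
  · intro α β x y
    rw [hnbr, hnbr, hRq, hRp, hRq, hRp,
      hskew α β (R α x) y, hskew α β x (R β y), hskew α β x y]
    module
  · intro α β γ x y z
    rw [hnbr α (β * γ), hnbr β (γ * α), hnbr γ (α * β)]
    simp only [hRN]
    simp only [hnbr, hRq, hRp, map_add, map_smul, smul_add]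
    trans (lam • lam • (br α (β * γ) (q α (q α x)) (br β γ (q β y) (p γ z))
        + br β (γ * α) (q β (q β y)) (br γ α (q γ z) (p α x))
        + br γ (α * β) (q γ (q γ z)) (br α β (q α x) (p β y)))
      + lam • (br α (β * γ) (q α (q α (R α x))) (br β γ (q β y) (p γ z))
        + br β (γ * α) (q β (q β y)) (br γ α (q γ z) (p α (R α x)))
        + br γ (α * β) (q γ (q γ z)) (br α β (q α (R α x)) (p β y)))
      + lam • (br α (β * γ) (q α (q α x)) (br β γ (q β (R β y)) (p γ z))
        + br β (γ * α) (q β (q β (R β y))) (br γ α (q γ z) (p α x))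
        + br γ (α * β) (q γ (q γ z)) (br α β (q α x) (p β (R β y))))
      + lam • (br α (β * γ) (q α (q α x)) (br β γ (q β y) (p γ (R γ z)))
        + br β (γ * α) (q β (q β y)) (br γ α (q γ (R γ z)) (p α x))
        + br γ (α * β) (q γ (q γ (R γ z))) (br α β (q α x) (p β y)))
      + (br α (β * γ) (q α (q α (R α x))) (br β γ (q β (R β y)) (p γ z))
        + br β (γ * α) (q β (q β (R β y))) (br γ α (q γ z) (p α (R α x)))
        + br γ (α * β) (q γ (q γ z)) (br α β (q α (R α x)) (p β (R β y))))
      + (br α (β * γ) (q α (q α (R α x))) (br β γ (q β y) (p γ (R γ z)))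
        + br β (γ * α) (q β (q β y)) (br γ α (q γ (R γ z)) (p α (R α x)))
        + br γ (α * β) (q γ (q γ (R γ z))) (br α β (q α (R α x)) (p β y)))
      + (br α (β * γ) (q α (q α x)) (br β γ (q β (R β y)) (p γ (R γ z)))
        + br β (γ * α) (q β (q β (R β y))) (br γ α (q γ (R γ z)) (p α x))
        + br γ (α * β) (q γ (q γ (R γ z))) (br α β (q α x) (p β (R β y)))))
    · module
    · rw [hjac α β γ x y z, hjac α β γ (R α x) y z, hjac α β γ x (R β y) z,
        hjac α β γ x y (R γ z), hjac α β γ (R α x) (R β y) z,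
        hjac α β γ (R α x) y (R γ z), hjac α β γ x (R β y) (R γ z)]
      simp
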